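/- There exist λ₁ ∈ [0,1] and λ₂ ∈ [-1,1] such that r(t) = λ₁ + 2(λ₂ - λ₁) t + 3(1 - λ₂) t² is negative for some t ∈ [0,1]. In particular, for λ₁ = 0.059 and λ₂ = -1, r takes negative values on [0,1]. -/
import Mathlib

theorem stmt_14 :
    (∃ l1 ∈ Set.Icc (0:ℝ) 1, ∃ l2 ∈ Set.Icc (-1:ℝ) 1, ∃ t ∈ Set.Icc (0:ℝ) 1,
      l1 + 2 * (l2 - l1) * t + 3 * (1 - l2) * t ^ 2 < 0) ∧
    (∃ t ∈ Set.Icc (0:ℝ) 1,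
      (0.059 : ℝ) + 2 * ((-1) - 0.059) * t + 3 * (1 - (-1)) * t ^ 2 < 0) := by
  constructor
  · exact ⟨0.059, by norm_num, -1, by norm_num, 0.1, by norm_num, by norm_num⟩
  · exact ⟨0.1, by norm_num, by norm_num⟩
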